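/- arXiv:1306.5866 — 5 statements merged into one kernel-verified Lean document; each statement's English description precedes it below -/
import Mathlib

section
/- For every real t with 0 < t ≤ 1, (8(1+t))^(1/4) · t^(1/8) ≤ 1 + √t, with equality if and only if t = 1. -/
theorem stmt_1 (t : ℝ) (ht0 : 0 < t) (ht1 : t ≤ 1) :
    (8 * (1 + t)) ^ ((1 : ℝ)/4) * t ^ ((1 : ℝ)/8) ≤ 1 + Real.sqrt t ∧
    ((8 * (1 + t)) ^ ((1 : ℝ)/4) * t ^ ((1 : ℝ)/8) = 1 + Real.sqrt t ↔ t = 1) := by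
  set u := Real.sqrt t with hu
  have hu0 : 0 < u := Real.sqrt_pos.2 ht0
  have htu : u ^ 2 = t := Real.sq_sqrt ht0.le
  have hu1 : u ≤ 1 := by
    rw [hu, show (1:ℝ) = Real.sqrt 1 by simp]
    exact Real.sqrt_le_sqrt ht1
  -- rewrite t^(1/8) as u^(1/4)
  have h8 : t ^ ((1:ℝ)/8) = u ^ ((1:ℝ)/4) := by
    rw [hu, Real.sqrt_eq_rpow, ← Real.rpow_mul ht0.le]
    norm_num
  have hA0 : (0:ℝ) ≤ 8 * (1 + t) * u := by positivity
  have hB0 : (0:ℝ) ≤ (1 + u) ^ 4 := by positivity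
  have hLHS : (8 * (1 + t)) ^ ((1 : ℝ)/4) * t ^ ((1 : ℝ)/8)
      = (8 * (1 + t) * u) ^ ((1:ℝ)/4) := by
    rw [h8, ← Real.mul_rpow (by positivity) hu0.le]
  have hRHS : ((1 + u) ^ 4) ^ ((1:ℝ)/4) = 1 + u := by
    rw [← Real.rpow_natCast (1 + u) 4, ← Real.rpow_mul (by positivity)]
    norm_num
  have hAB : 8 * (1 + t) * u ≤ (1 + u) ^ 4 := by nlinarith [sq_nonneg (1 - u), sq_nonneg ((1 - u)^2)]
  constructor
  · calc (8 * (1 + t)) ^ ((1 : ℝ)/4) * t ^ ((1 : ℝ)/8)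
        = (8 * (1 + t) * u) ^ ((1:ℝ)/4) := hLHS
      _ ≤ ((1 + u) ^ 4) ^ ((1:ℝ)/4) := Real.rpow_le_rpow hA0 hAB (by norm_num)
      _ = 1 + u := hRHS
  · constructor
    · intro h
      rw [hLHS, ← hRHS] at h
      have hAB' : 8 * (1 + t) * u = (1 + u) ^ 4 := by
        have h4 := congrArg (· ^ (4:ℝ)) h
        rwa [← Real.rpow_mul hA0, ← Real.rpow_mul hB0, show (1:ℝ)/4 * 4 = 1 by norm_num,
          Real.rpow_one, Real.rpow_one] at h4
      have h14 : (1 - u) ^ 4 = 0 := by nlinarith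
      have hu1' : u = 1 := by
        have := pow_eq_zero_iff (n := 4) (by norm_num) |>.1 h14
        linarith
      nlinarith
    · intro h
      subst h
      have hu' : u = 1 := by rw [hu]; simp
      rw [hLHS, hu']
      norm_num
end

section
/- Let -1 < α ≤ β < 1 and define C₁ = (1/2)·((((1-α²)^(1/4) + (1-β²)^(1/4)) / (((1-α)(1+β))^(1/4) + ((1+α)(1-β))^(1/4)))⁴. Then C₁ ≤ (1/4)·(√((1+α)(1+β)) + √((1-α)(1-β))). -/
set_option maxHeartbeats 1000000

private lemma G0 (x y z w : ℝ) (hx : 0 < x) (hy : 0 < y) (hz : 0 < z) (hw : 0 < w)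
    (hwx : w ≤ x) (hyz : y ≤ z) :
    0 ≤ (x+z)^2*(2*x*z-x*y-z*w) + (y+w)^2*(2*y*w-x*y-z*w) := by
  have hu : 0 ≤ x - w := by linarith
  have hv : 0 ≤ z - y := by linarith
  nlinarith [mul_nonneg (mul_nonneg (mul_nonneg hu hu) hx.le) hy.le,
    mul_nonneg (mul_nonneg (mul_nonneg hu hu) hu) hv,
    mul_nonneg (mul_nonneg (mul_nonneg hu hu) hv) hv,
    mul_nonneg (mul_nonneg (mul_nonneg hu hu) hw.le) hy.le,
    mul_nonneg (mul_nonneg (mul_nonneg hu hu) hy.le) hy.le,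
    mul_nonneg (mul_nonneg (mul_nonneg hu hv) hx.le) hx.le,
    mul_nonneg (mul_nonneg (mul_nonneg hu hv) hx.le) hw.le,
    mul_nonneg (mul_nonneg (mul_nonneg hu hv) hx.le) hy.le,
    mul_nonneg (mul_nonneg (mul_nonneg hu hv) hz.le) hw.le,
    mul_nonneg (mul_nonneg (mul_nonneg hu hv) hz.le) hy.le,
    mul_nonneg (mul_nonneg (mul_nonneg hu hv) hv) hv,
    mul_nonneg (mul_nonneg (mul_nonneg hu hv) hy.le) hy.le,
    mul_nonneg (mul_nonneg (mul_nonneg hv hv) hx.le) hx.le,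
    mul_nonneg (mul_nonneg (mul_nonneg hv hv) hx.le) hz.le,
    mul_nonneg (mul_nonneg (mul_nonneg hv hv) hx.le) hy.le]

private lemma Gnn (x y z w : ℝ) (hx : 0 < x) (hy : 0 < y) (hz : 0 < z) (hw : 0 < w)
    (h1 : x^2 + y^2 = 2) (h2 : z^2 + w^2 = 2) :
    0 ≤ (x+z)^2*(2*x*z-x*y-z*w) + (y+w)^2*(2*y*w-x*y-z*w) := by
  have hr : (x-w)*(x+w) = (z-y)*(z+y) := by linear_combination h1 - h2
  rcases le_total w x with hwx | hxw
  · have h0 : (0:ℝ) * (z+y) ≤ (z-y)*(z+y) := by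
      rw [zero_mul, ← hr]
      exact mul_nonneg (by linarith) (by positivity)
    have hyz : y ≤ z := by
      have := le_of_mul_le_mul_right h0 (by positivity : (0:ℝ) < z + y)
      linarith
    exact G0 x y z w hx hy hz hw hwx hyz
  · have h0 : (z-y)*(z+y) ≤ 0 * (z+y) := by
      rw [zero_mul, ← hr]
      nlinarith [mul_nonneg (sub_nonneg.2 hxw) (by positivity : (0:ℝ) ≤ x+w)]
    have hzy : z ≤ y := by
      have := le_of_mul_le_mul_right h0 (by positivity : (0:ℝ) < z + y)
      linarith
    have := G0 y x w z hy hx hw hz hzy hxw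
    linarith [this]

private lemma L1 (x y z w : ℝ) (hx : 0 < x) (hy : 0 < y) (hz : 0 < z) (hw : 0 < w)
    (h1 : x^2 + y^2 = 2) (h2 : z^2 + w^2 = 2) :
    (x*y+z*w)^2*((x+z)^2+(y+w)^2) ≤ 4*(x*z*(x+z)^2 + y*w*(y+w)^2) := by
  have hG := Gnn x y z w hx hy hz hw h1 h2
  have hxy2 : x*y + z*w ≤ 2 := by nlinarith [sq_nonneg (x-y), sq_nonneg (z-w)]
  have hP : 0 ≤ (x*y+z*w)*((x+z)^2+(y+w)^2)*(2-(x*y+z*w)) :=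
    mul_nonneg (mul_nonneg (by positivity) (by positivity)) (by linarith)
  linarith [hG, hP]

private lemma L2 (x y z w : ℝ) (hx : 0 < x) (hy : 0 < y) (hz : 0 < z) (hw : 0 < w)
    (h1 : x^2 + y^2 = 2) (h2 : z^2 + w^2 = 2) :
    (x*y+z*w)^2*((x-z)^2+(y-w)^2) ≤ 4*(x*z*(y-w)^2 + y*w*(x-z)^2) := by
  have hL1 := L1 x y z w hx hy hz hw h1 h2
  have hd : (x-z)^2*(x+z)^2 = (y-w)^2*(y+w)^2 := by
    linear_combination (x^2-z^2-y^2+w^2)*h1 - (x^2-z^2-y^2+w^2)*h2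
  have key : (4*(x*z*(y-w)^2 + y*w*(x-z)^2) - (x*y+z*w)^2*((x-z)^2+(y-w)^2)) * (x+z)^2
      = (y-w)^2 * (4*(x*z*(x+z)^2+y*w*(y+w)^2) - (x*y+z*w)^2*((x+z)^2+(y+w)^2)) := by
    linear_combination (4*y*w - (x*y+z*w)^2)*hd
  have h9 : (0:ℝ) * (x+z)^2 ≤
      (4*(x*z*(y-w)^2 + y*w*(x-z)^2) - (x*y+z*w)^2*((x-z)^2+(y-w)^2)) * (x+z)^2 := by
    rw [zero_mul, key]
    exact mul_nonneg (sq_nonneg _) (by linarith)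
  have h10 := le_of_mul_le_mul_right h9 (by positivity : (0:ℝ) < (x+z)^2)
  linarith

private lemma diamond (p q r s : ℝ) (hp : 0 < p) (hq : 0 < q) (hr : 0 < r) (hs : 0 < s)
    (h1 : p^4 + q^4 = 2) (h2 : r^4 + s^4 = 2) :
    2*(p*q+r*s)^4 ≤ (p^2*r^2+q^2*s^2)*((p^2+r^2)*(q^2+s^2))*((q*r+p*s)^2) := by
  have hL2 := L2 (p^2) (q^2) (r^2) (s^2) (by positivity) (by positivity) (by positivity)
    (by positivity) (by linear_combination h1) (by linear_combination h2)
  have hdiff : (p^2*r^2+q^2*s^2)*((p^2+r^2)*(q^2+s^2))*((q*r+p*s)^2) - 2*(p*q+r*s)^4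
      = 2*(p^2*r^2*(q^2-s^2)^2 + q^2*s^2*(p^2-r^2)^2)
        - (p*q*r*s)*(p^2*q^2+r^2*s^2)*((p^2-r^2)^2+(q^2-s^2)^2) := by
    linear_combination (((p^2+r^2)*(q^2+s^2) + 2*p*q*r*s)*(r^2*s^2)
        + (p*q*r*s)*(p^2*q^2+r^2*s^2)) * h1
      + (((p^2+r^2)*(q^2+s^2) + 2*p*q*r*s)*(p^2*q^2)
        + (p*q*r*s)*(p^2*q^2+r^2*s^2)) * h2
  have hprod : 0 ≤ (p^2*q^2+r^2*s^2 - 2*(p*q*r*s))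
      * ((p^2*q^2+r^2*s^2)*((p^2-r^2)^2+(q^2-s^2)^2)) :=
    mul_nonneg (by nlinarith [sq_nonneg (p*q - r*s)]) (by positivity)
  linarith [hL2, hdiff, hprod]

private lemma key (p q r s : ℝ) (hp : 0 < p) (hq : 0 < q) (hr : 0 < r) (hs : 0 < s)
    (h1 : p^4 + q^4 = 2) (h2 : r^4 + s^4 = 2) :
    2*(p*q+r*s)^4 ≤ (q*r+p*s)^4*(p^2*r^2+q^2*s^2) := by
  have hd : (r^2-p^2)*(p^2+r^2) = (q^2-s^2)*(q^2+s^2) := by linear_combination h2 - h1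
  have e1 : ((r^2-p^2)*(q^2-s^2))*(q^2+s^2) = (r^2-p^2)^2*(p^2+r^2) := by
    linear_combination (p^2-r^2)*hd
  have e2 : (0:ℝ)*(q^2+s^2) ≤ ((r^2-p^2)*(q^2-s^2))*(q^2+s^2) := by
    rw [zero_mul, e1]; positivity
  have hdd : 0 ≤ (r^2-p^2)*(q^2-s^2) :=
    le_of_mul_le_mul_right e2 (by positivity : (0:ℝ) < q^2+s^2)
  have hdia := diamond p q r s hp hq hr hs h1 h2
  have hEFM : (p*q+r*s)^2 ≤ (p^2+r^2)*(q^2+s^2) := by nlinarith [sq_nonneg (p*s-q*r)]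
  have hE2F2M : (p*q+r*s)^4*((p^2+r^2)^2+(q^2+s^2)^2)
      = (p*q+r*s)^4*(4+2*(p^2*r^2+q^2*s^2)) := by
    linear_combination (p*q+r*s)^4*h1 + (p*q+r*s)^4*h2
  have hMT : 0 ≤ ((p^2+r^2)*(q^2+s^2) - (p*q+r*s)^2)*((p*q+r*s)^2*(p^2*r^2+q^2*s^2)) :=
    mul_nonneg (by linarith) (by positivity)
  have big : (p*q+r*s)^4*((p^2+r^2)^2+(q^2+s^2)^2)
      ≤ 2*((p^2+r^2)*(q^2+s^2))*((q*r+p*s)^2+(p*q+r*s)^2)*(p^2*r^2+q^2*s^2) := by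
    linarith [hdia, hMT, hE2F2M]
  have h5 := mul_le_mul_of_nonneg_left big hdd
  have idd : (p*q+r*s)^4*(((r^2-p^2)^2+(q^2-s^2)^2)*((p^2+r^2)*(q^2+s^2)))
      = ((r^2-p^2)*(q^2-s^2))*((p*q+r*s)^4*((p^2+r^2)^2+(q^2+s^2)^2)) := by
    linear_combination ((p*q+r*s)^4*((r^2-p^2)*(q^2+s^2) - (q^2-s^2)*(p^2+r^2)))*hd
  have pen : (p*q+r*s)^4*((r^2-p^2)^2+(q^2-s^2)^2)
      ≤ 2*((q*r+p*s)^2+(p*q+r*s)^2)*(p^2*r^2+q^2*s^2)*((r^2-p^2)*(q^2-s^2)) := by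
    have hEFpos : (0:ℝ) < (p^2+r^2)*(q^2+s^2) := by positivity
    have h6 : ((p*q+r*s)^4*((r^2-p^2)^2+(q^2-s^2)^2)) * ((p^2+r^2)*(q^2+s^2))
        ≤ (2*((q*r+p*s)^2+(p*q+r*s)^2)*(p^2*r^2+q^2*s^2)*((r^2-p^2)*(q^2-s^2)))
          * ((p^2+r^2)*(q^2+s^2)) := by linarith [h5, idd]
    exact le_of_mul_le_mul_right h6 hEFpos
  have hfin : (q*r+p*s)^4*(p^2*r^2+q^2*s^2) - 2*(p*q+r*s)^4
      = ((r^2-p^2)*(q^2-s^2))*(((q*r+p*s)^2+(p*q+r*s)^2)*(p^2*r^2+q^2*s^2))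
        - (p*q+r*s)^4*((r^2-p^2)^2+(q^2-s^2)^2)/2 := by
    linear_combination ((p*q+r*s)^4/2)*h1 + ((p*q+r*s)^4/2)*h2
  linarith [pen, hfin]

theorem stmt_8 (α β : ℝ) (h1 : -1 < α) (h2 : α ≤ β) (h3 : β < 1)
    (C₁ : ℝ)
    (hC₁ : C₁ = (1/2) * (((1 - α ^ 2) ^ ((1 : ℝ)/4) + (1 - β ^ 2) ^ ((1 : ℝ)/4)) /
      (((1 - α) * (1 + β)) ^ ((1 : ℝ)/4) + ((1 + α) * (1 - β)) ^ ((1 : ℝ)/4))) ^ 4) :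
    C₁ ≤ (1/4) * (Real.sqrt ((1 + α) * (1 + β)) + Real.sqrt ((1 - α) * (1 - β))) := by
  have ha : (0:ℝ) < 1 + α := by linarith
  have hb : (0:ℝ) < 1 - α := by linarith
  have hc : (0:ℝ) < 1 + β := by linarith
  have hdβ : (0:ℝ) < 1 - β := by linarith
  have h14 : ∀ t : ℝ, 0 < t → (t^((1:ℝ)/4))^(4:ℕ) = t := by
    intro t ht
    rw [← Real.rpow_natCast (t^((1:ℝ)/4)) 4, ← Real.rpow_mul ht.le]
    norm_num
  have h12 : ∀ t : ℝ, 0 < t → (t^((1:ℝ)/4))^(2:ℕ) = t^((1:ℝ)/2) := by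
    intro t ht
    rw [← Real.rpow_natCast (t^((1:ℝ)/4)) 2, ← Real.rpow_mul ht.le]
    norm_num
  have e1 : (1 - α^2 : ℝ)^((1:ℝ)/4) = (1+α)^((1:ℝ)/4) * (1-α)^((1:ℝ)/4) := by
    rw [show (1:ℝ) - α^2 = (1+α)*(1-α) by ring, Real.mul_rpow ha.le hb.le]
  have e2 : (1 - β^2 : ℝ)^((1:ℝ)/4) = (1+β)^((1:ℝ)/4) * (1-β)^((1:ℝ)/4) := by
    rw [show (1:ℝ) - β^2 = (1+β)*(1-β) by ring, Real.mul_rpow hc.le hdβ.le]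
  have e3 : ((1-α)*(1+β) : ℝ)^((1:ℝ)/4) = (1-α)^((1:ℝ)/4) * (1+β)^((1:ℝ)/4) :=
    Real.mul_rpow hb.le hc.le
  have e4 : ((1+α)*(1-β) : ℝ)^((1:ℝ)/4) = (1+α)^((1:ℝ)/4) * (1-β)^((1:ℝ)/4) :=
    Real.mul_rpow ha.le hdβ.le
  have e5 : Real.sqrt ((1+α)*(1+β)) = ((1+α)^((1:ℝ)/4))^2 * ((1+β)^((1:ℝ)/4))^2 := by
    rw [Real.sqrt_eq_rpow, Real.mul_rpow ha.le hc.le, h12 _ ha, h12 _ hc]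
  have e6 : Real.sqrt ((1-α)*(1-β)) = ((1-α)^((1:ℝ)/4))^2 * ((1-β)^((1:ℝ)/4))^2 := by
    rw [Real.sqrt_eq_rpow, Real.mul_rpow hb.le hdβ.le, h12 _ hb, h12 _ hdβ]
  rw [hC₁, e1, e2, e3, e4, e5, e6]
  set p := (1+α)^((1:ℝ)/4) with hpdef
  set q := (1-α)^((1:ℝ)/4) with hqdef
  set r := (1+β)^((1:ℝ)/4) with hrdef
  set s := (1-β)^((1:ℝ)/4) with hsdef
  have hp : 0 < p := Real.rpow_pos_of_pos ha _
  have hq : 0 < q := Real.rpow_pos_of_pos hb _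
  have hr : 0 < r := Real.rpow_pos_of_pos hc _
  have hs : 0 < s := Real.rpow_pos_of_pos hdβ _
  have hpq : p^4 + q^4 = 2 := by
    rw [hpdef, hqdef, h14 _ ha, h14 _ hb]; ring
  have hrs : r^4 + s^4 = 2 := by
    rw [hrdef, hsdef, h14 _ hc, h14 _ hdβ]; ring
  have hkey := key p q r s hp hq hr hs hpq hrs
  have hden : (0:ℝ) < (q*r + p*s)^4 := by positivity
  rw [div_pow, ← mul_div_assoc, div_le_iff₀ hden]
  nlinarith [hkey, sq_nonneg (p*r), sq_nonneg (q*s)]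
end

section
/- Let -1 < α < β < 1 and ξ > 1. Set S = sqrt((1+ξ)(1-α)/(2(ξ-α))), C = sqrt((ξ-1)(1+α)/(2(ξ-α))), D = sqrt((ξ-β)(1+α)/((1+β)(ξ-α))), s = sqrt((1-α)/2), c = sqrt((1+α)/2), d = sqrt((1+α)/(1+β)). Then |S·c·d - s·C·D| / (S·c·d + s·C·D) = |√((1+ξ)(ξ-α)) - √((ξ-1)(ξ-β))| / (√((1+ξ)(ξ-α)) + √((ξ-1)(ξ-β))). -/
theorem stmt_13 (α β ξ : ℝ) (h1 : -1 < α) (h2 : α < β) (h3 : β < 1) (h4 : 1 < ξ)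
    (S C D s c d : ℝ)
    (hS : S = Real.sqrt ((1 + ξ) * (1 - α) / (2 * (ξ - α))))
    (hC : C = Real.sqrt ((ξ - 1) * (1 + α) / (2 * (ξ - α))))
    (hD : D = Real.sqrt ((ξ - β) * (1 + α) / ((1 + β) * (ξ - α))))
    (hs : s = Real.sqrt ((1 - α) / 2))
    (hc : c = Real.sqrt ((1 + α) / 2))
    (hd : d = Real.sqrt ((1 + α) / (1 + β))) :
    |S * c * d - s * C * D| / (S * c * d + s * C * D)
      = |Real.sqrt ((1 + ξ) * (ξ - α)) - Real.sqrt ((ξ - 1) * (ξ - β))| /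
        (Real.sqrt ((1 + ξ) * (ξ - α)) + Real.sqrt ((ξ - 1) * (ξ - β))) := by
  have hαβ : α < 1 := h2.trans h3
  have hβ1 : -1 < β := h1.trans h2
  have hp1 : (0:ℝ) < 1 + α := by linarith
  have hp2 : (0:ℝ) < 1 - α := by linarith
  have hp3 : (0:ℝ) < 1 + β := by linarith
  have hp4 : (0:ℝ) < ξ - α := by linarith
  have hp5 : (0:ℝ) < ξ - β := by linarith
  have hp6 : (0:ℝ) < ξ - 1 := by linarith
  have hp7 : (0:ℝ) < 1 + ξ := by linarith
  set Kx : ℝ := (1 - α) * (1 + α) ^ 2 / (4 * (ξ - α) ^ 2 * (1 + β)) with hKx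
  have hKxpos : 0 < Kx := by positivity
  set K : ℝ := Real.sqrt Kx with hK
  have hKpos : 0 < K := Real.sqrt_pos.mpr hKxpos
  have hScd : S * c * d = K * Real.sqrt ((1 + ξ) * (ξ - α)) := by
    rw [hS, hc, hd, hK, ← Real.sqrt_mul (by positivity), ← Real.sqrt_mul (by positivity),
      ← Real.sqrt_mul hKxpos.le]
    congr 1
    rw [hKx]
    field_simp
    ring
  have hsCD : s * C * D = K * Real.sqrt ((ξ - 1) * (ξ - β)) := by
    rw [hs, hC, hD, hK, ← Real.sqrt_mul (by positivity), ← Real.sqrt_mul (by positivity),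
      ← Real.sqrt_mul hKxpos.le]
    congr 1
    rw [hKx]
    field_simp
    ring
  rw [hScd, hsCD, ← mul_sub, ← mul_add, abs_mul, abs_of_pos hKpos,
    mul_div_mul_left _ _ hKpos.ne']
end

section
/- Let -1 < α < β < 1 and ξ > 1. Then (2ξ - ξα + ξβ - α - β) > 0 and the quantity B₂ defined as the product of [(2ξ-ξα+ξβ-α-β)·((1+α)(1-β)/((1-α)(1+β)))^(1/4) + 2√((ξ-α)(ξ-β)) - (β-α)√(ξ²-1)] / [(2ξ-ξα+ξβ-α-β)·((1+α)(1-β)/((1-α)(1+β)))^(1/4) + 2√((ξ-α)(ξ-β)) + (β-α)√(ξ²-1)] with |√((1+ξ)(ξ-α)) - √((ξ-1)(ξ-β))| / (√((1+ξ)(ξ-α)) + √((ξ-1)(ξ-β))) satisfies 0 ≤ B₂ < 1. -/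
theorem stmt_18 (α β ξ : ℝ) (h1 : -1 < α) (h2 : α < β) (h3 : β < 1) (h4 : 1 < ξ)
    (B₂ : ℝ)
    (hB₂ : B₂ =
      (((2*ξ - ξ*α + ξ*β - α - β) * ((1 + α) * (1 - β) / ((1 - α) * (1 + β))) ^ ((1 : ℝ)/4)
          + 2 * Real.sqrt ((ξ - α) * (ξ - β)) - (β - α) * Real.sqrt (ξ ^ 2 - 1)) /
        ((2*ξ - ξ*α + ξ*β - α - β) * ((1 + α) * (1 - β) / ((1 - α) * (1 + β))) ^ ((1 : ℝ)/4)
          + 2 * Real.sqrt ((ξ - α) * (ξ - β)) + (β - α) * Real.sqrt (ξ ^ 2 - 1))) *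
      (|Real.sqrt ((1 + ξ) * (ξ - α)) - Real.sqrt ((ξ - 1) * (ξ - β))| /
        (Real.sqrt ((1 + ξ) * (ξ - α)) + Real.sqrt ((ξ - 1) * (ξ - β))))) :
    0 < 2*ξ - ξ*α + ξ*β - α - β ∧ 0 ≤ B₂ ∧ B₂ < 1 := by
  have hD : 0 < 2*ξ - ξ*α + ξ*β - α - β := by nlinarith
  refine ⟨hD, ?_⟩
  set r : ℝ := ((1 + α) * (1 - β) / ((1 - α) * (1 + β))) ^ ((1 : ℝ)/4) with hr
  set s1 : ℝ := Real.sqrt ((ξ - α) * (ξ - β)) with hs1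
  set s2 : ℝ := Real.sqrt (ξ ^ 2 - 1) with hs2
  set a : ℝ := Real.sqrt ((1 + ξ) * (ξ - α)) with ha
  set b : ℝ := Real.sqrt ((ξ - 1) * (ξ - β)) with hb
  have hrpos : 0 < r := by
    apply Real.rpow_pos_of_pos
    apply div_pos <;> nlinarith
  have hs1sq : s1 ^ 2 = (ξ - α) * (ξ - β) := Real.sq_sqrt (by nlinarith)
  have hs2sq : s2 ^ 2 = ξ ^ 2 - 1 := Real.sq_sqrt (by nlinarith)
  have hs1pos : 0 < s1 := Real.sqrt_pos.2 (by nlinarith)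
  have hs2pos : 0 < s2 := Real.sqrt_pos.2 (by nlinarith)
  have hapos : 0 < a := Real.sqrt_pos.2 (by nlinarith)
  have hbpos : 0 < b := Real.sqrt_pos.2 (by nlinarith)
  clear_value r s1 s2 a b
  have hf1 : 0 < ξ*(2+α-β) - α - β := by nlinarith
  have hsqcmp : (β-α)^2 * s2^2 < 4 * s1^2 := by
    rw [hs1sq, hs2sq]
    nlinarith [mul_pos hf1 hD]
  -- key: 2*s1 > (β-α)*s2
  have hkey : (β - α) * s2 < 2 * s1 := by
    by_contra hc
    push_neg at hc
    nlinarith [sq_nonneg ((β-α)*s2 - 2*s1), mul_pos hs1pos hs2pos]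
  have hnum : 0 < (2*ξ - ξ*α + ξ*β - α - β) * r + 2 * s1 - (β - α) * s2 := by
    linarith [mul_pos hD hrpos, hkey]
  have hden : 0 < (2*ξ - ξ*α + ξ*β - α - β) * r + 2 * s1 + (β - α) * s2 := by
    linarith [mul_pos hD hrpos, mul_pos (sub_pos.2 h2) hs2pos, hs1pos]
  have hF1lt : ((2*ξ - ξ*α + ξ*β - α - β) * r + 2 * s1 - (β - α) * s2) /
      ((2*ξ - ξ*α + ξ*β - α - β) * r + 2 * s1 + (β - α) * s2) < 1 := by
    rw [div_lt_one hden]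
    linarith [mul_pos (sub_pos.2 h2) hs2pos]
  have hF1nn : 0 ≤ ((2*ξ - ξ*α + ξ*β - α - β) * r + 2 * s1 - (β - α) * s2) /
      ((2*ξ - ξ*α + ξ*β - α - β) * r + 2 * s1 + (β - α) * s2) :=
    le_of_lt (div_pos hnum hden)
  have habpos : 0 < a + b := by linarith
  have hF2lt : |a - b| / (a + b) < 1 := by
    rw [div_lt_one habpos, abs_lt]
    constructor <;> linarith
  have hF2nn : 0 ≤ |a - b| / (a + b) := div_nonneg (abs_nonneg _) (le_of_lt habpos)
  constructor
  · rw [hB₂]; exact mul_nonneg hF1nn hF2nn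
  · rw [hB₂]
    exact lt_of_le_of_lt (mul_le_of_le_one_left hF2nn (le_of_lt hF1lt)) hF2lt
end

section
/- Let -1 < α < β < 1, k = sqrt(2(β-α)/((1-α)(1+β))), k' = √(1-k²), dnρ = sqrt((1+α)/(1+β)), cn²ρ = (1+α)/2, sn²ρ = (1-α)/2. Then (1+β)/(2(1+α)) · ((√k' + dnρ)/(1 + √k'))⁴ = (1/2)·(((1-α²)^(1/4) + (1-β²)^(1/4)) / (((1-α)(1+β))^(1/4) + ((1+α)(1-β))^(1/4)))⁴. -/
theorem stmt_19 (α β k k' dnρ : ℝ) (h1 : -1 < α) (h2 : α < β) (h3 : β < 1)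
    (hk : k = Real.sqrt (2 * (β - α) / ((1 - α) * (1 + β))))
    (hk' : k' = Real.sqrt (1 - k ^ 2))
    (hdn : dnρ = Real.sqrt ((1 + α) / (1 + β))) :
    (1 + β) / (2 * (1 + α)) * ((Real.sqrt k' + dnρ) / (1 + Real.sqrt k')) ^ 4
      = (1/2) * (((1 - α ^ 2) ^ ((1 : ℝ)/4) + (1 - β ^ 2) ^ ((1 : ℝ)/4)) /
        (((1 - α) * (1 + β)) ^ ((1 : ℝ)/4) + ((1 + α) * (1 - β)) ^ ((1 : ℝ)/4))) ^ 4 := by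
  have ha1 : (0:ℝ) < 1 + α := by linarith
  have ha2 : (0:ℝ) < 1 - α := by linarith
  have hb1 : (0:ℝ) < 1 + β := by linarith
  have hb2 : (0:ℝ) < 1 - β := by linarith
  have hba : (0:ℝ) < β - α := by linarith
  set u := (1 + α) ^ ((1:ℝ)/4) with hu
  set v := (1 - α) ^ ((1:ℝ)/4) with hv
  set w := (1 + β) ^ ((1:ℝ)/4) with hw
  set z := (1 - β) ^ ((1:ℝ)/4) with hz
  have hup : 0 < u := Real.rpow_pos_of_pos ha1 _
  have hvp : 0 < v := Real.rpow_pos_of_pos ha2 _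
  have hwp : 0 < w := Real.rpow_pos_of_pos hb1 _
  have hzp : 0 < z := Real.rpow_pos_of_pos hb2 _
  have pow4 : ∀ x : ℝ, 0 < x → (x ^ ((1:ℝ)/4)) ^ 4 = x := by
    intro x hx
    rw [← Real.rpow_natCast (x ^ ((1:ℝ)/4)) 4, ← Real.rpow_mul hx.le]
    norm_num
  have hu4 : u ^ 4 = 1 + α := pow4 _ ha1
  have hv4 : v ^ 4 = 1 - α := pow4 _ ha2
  have hw4 : w ^ 4 = 1 + β := pow4 _ hb1
  have hz4 : z ^ 4 = 1 - β := pow4 _ hb2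
  have sq4 : ∀ x : ℝ, 0 < x → Real.sqrt x = (x ^ ((1:ℝ)/4)) ^ 2 := by
    intro x hx
    rw [← Real.rpow_natCast (x ^ ((1:ℝ)/4)) 2, ← Real.rpow_mul hx.le,
      Real.sqrt_eq_rpow]
    norm_num
  have hdn' : dnρ = u ^ 2 / w ^ 2 := by
    rw [hdn, sq4 _ (div_pos ha1 hb1), Real.div_rpow ha1.le hb1.le, div_pow]
  have hk2 : k ^ 2 = 2 * (β - α) / ((1 - α) * (1 + β)) := by
    rw [hk, Real.sq_sqrt]
    positivity
  have hkk : 1 - k ^ 2 = ((1 + α) * (1 - β)) / ((1 - α) * (1 + β)) := by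
    rw [hk2]
    field_simp
    ring
  have hkp : (0:ℝ) < ((1 + α) * (1 - β)) / ((1 - α) * (1 + β)) := by positivity
  have hsk' : Real.sqrt k' = (u * z) / (v * w) := by
    rw [hk', hkk, Real.sqrt_eq_rpow, Real.sqrt_eq_rpow, ← Real.rpow_mul hkp.le]
    norm_num
    rw [Real.div_rpow (by positivity) (by positivity),
      Real.mul_rpow ha1.le hb2.le, Real.mul_rpow ha2.le hb1.le]
  have hnum1 : (1 - α ^ 2) ^ ((1:ℝ)/4) = v * u := by
    have : 1 - α ^ 2 = (1 - α) * (1 + α) := by ring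
    rw [this, Real.mul_rpow ha2.le ha1.le]
  have hnum2 : (1 - β ^ 2) ^ ((1:ℝ)/4) = z * w := by
    have : 1 - β ^ 2 = (1 - β) * (1 + β) := by ring
    rw [this, Real.mul_rpow hb2.le hb1.le]
  have hden1 : ((1 - α) * (1 + β)) ^ ((1:ℝ)/4) = v * w :=
    Real.mul_rpow ha2.le hb1.le
  have hden2 : ((1 + α) * (1 - β)) ^ ((1:ℝ)/4) = u * z :=
    Real.mul_rpow ha1.le hb2.le
  rw [hsk', hdn', hnum1, hnum2, hden1, hden2, ← hu4, ← hw4]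
  have hd1 : v * w + u * z > 0 := by positivity
  have hd2 : 1 + u * z / (v * w) > 0 := by positivity
  field_simp
  ring
end
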